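/- Let Φ*_r(u,t;v,ρ) := Φ(u,r,t;v,ρ) be the defining function with r frozen instead of t. Then for all (u,r,t,v,ρ) with Φ(u,r,t;v,ρ)=0, the rotational curvature of Φ*_r satisfies Rot(Φ*_r)(u,t;v,ρ) = det M(Φ*_r) = 4b⁴·r²·t·ρ·(r² − t² − ρ²), where M(Φ*_r) is the 3×3 Monge–Ampère matrix with rows (Φ*_r, ∂_vΦ*_r, ∂_ρΦ*_r), (∂_uΦ*_r, ∂²_{uv}Φ*_r, ∂²_{uρ}Φ*_r), (∂_tΦ*_r, ∂²_{tv}Φ*_r, ∂²_{tρ}Φ*_r). -/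

import Mathlib

/-- The defining function Φ(u,r,t;v,ρ) = (u−v)² − (b/2)²(4r²ρ² − (r²+ρ²−t²)²). -/
noncomputable def Phi (b u r t v ρ : ℝ) : ℝ :=
  (u - v) ^ 2 - (b / 2) ^ 2 * (4 * r ^ 2 * ρ ^ 2 - (r ^ 2 + ρ ^ 2 - t ^ 2) ^ 2)

/-- ∂_u Φ -/
noncomputable def Pu (b u r t v ρ : ℝ) : ℝ := deriv (fun u' => Phi b u' r t v ρ) u
/-- ∂_r Φ -/
noncomputable def Pr (b u r t v ρ : ℝ) : ℝ := deriv (fun r' => Phi b u r' t v ρ) r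
/-- ∂_t Φ -/
noncomputable def Pt (b u r t v ρ : ℝ) : ℝ := deriv (fun t' => Phi b u r t' v ρ) t
/-- ∂_v Φ -/
noncomputable def Pv (b u r t v ρ : ℝ) : ℝ := deriv (fun v' => Phi b u r t v' ρ) v
/-- ∂_ρ Φ -/
noncomputable def Pp (b u r t v ρ : ℝ) : ℝ := deriv (fun ρ' => Phi b u r t v ρ') ρ
/-- ∂²_{uv} Φ -/
noncomputable def Puv (b u r t v ρ : ℝ) : ℝ := deriv (fun u' => Pv b u' r t v ρ) u
/-- ∂²_{uρ} Φ -/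
noncomputable def Pup (b u r t v ρ : ℝ) : ℝ := deriv (fun u' => Pp b u' r t v ρ) u
/-- ∂²_{rv} Φ -/
noncomputable def Prv (b u r t v ρ : ℝ) : ℝ := deriv (fun r' => Pv b u r' t v ρ) r
/-- ∂²_{rρ} Φ -/
noncomputable def Prp (b u r t v ρ : ℝ) : ℝ := deriv (fun r' => Pp b u r' t v ρ) r
/-- ∂²_{tv} Φ -/
noncomputable def Ptv (b u r t v ρ : ℝ) : ℝ := deriv (fun t' => Pv b u r t' v ρ) t
/-- ∂²_{tρ} Φ -/
noncomputable def Ptp (b u r t v ρ : ℝ) : ℝ := deriv (fun t' => Pp b u r t' v ρ) t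
/-- ∂²_{vv} Φ -/
noncomputable def Pvv (b u r t v ρ : ℝ) : ℝ := deriv (fun v' => Pv b u r t v' ρ) v
/-- ∂²_{vρ} Φ -/
noncomputable def Pvp (b u r t v ρ : ℝ) : ℝ := deriv (fun v' => Pp b u r t v' ρ) v
/-- ∂²_{ρv} Φ -/
noncomputable def Ppv (b u r t v ρ : ℝ) : ℝ := deriv (fun ρ' => Pv b u r t v ρ') ρ
/-- ∂²_{ρρ} Φ -/
noncomputable def Ppp (b u r t v ρ : ℝ) : ℝ := deriv (fun ρ' => Pp b u r t v ρ') ρ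


lemma Pu_eq (b u r t v ρ : ℝ) : Pu b u r t v ρ = 2 * (u - v) := by
  have h : HasDerivAt (fun u' : ℝ => Phi b u' r t v ρ) (2 * (u - v)) u := by
    unfold Phi
    have H := (((hasDerivAt_id u).sub_const v).pow 2).sub_const
      ((b / 2) ^ 2 * (4 * r ^ 2 * ρ ^ 2 - (r ^ 2 + ρ ^ 2 - t ^ 2) ^ 2))
    refine (H).congr_deriv ?_; simp only [id_eq]; push_cast; ring
  exact h.deriv

lemma Pv_eq (b u r t v ρ : ℝ) : Pv b u r t v ρ = -2 * (u - v) := by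
  have h : HasDerivAt (fun v' : ℝ => Phi b u r t v' ρ) (-2 * (u - v)) v := by
    unfold Phi
    have H := (((hasDerivAt_id v).const_sub u).pow 2).sub_const
      ((b / 2) ^ 2 * (4 * r ^ 2 * ρ ^ 2 - (r ^ 2 + ρ ^ 2 - t ^ 2) ^ 2))
    refine (H).congr_deriv ?_; simp only [id_eq]; push_cast; ring
  exact h.deriv

lemma Pp_eq (b u r t v ρ : ℝ) : Pp b u r t v ρ = -(b ^ 2) * ρ * (r ^ 2 + t ^ 2 - ρ ^ 2) := by
  have h : HasDerivAt (fun ρ' : ℝ => Phi b u r t v ρ')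
      (-(b ^ 2) * ρ * (r ^ 2 + t ^ 2 - ρ ^ 2)) ρ := by
    unfold Phi
    have h1 : HasDerivAt (fun x : ℝ => 4 * r ^ 2 * x ^ 2 - (r ^ 2 + x ^ 2 - t ^ 2) ^ 2)
        (4 * r ^ 2 * (2 * ρ) - 2 * (r ^ 2 + ρ ^ 2 - t ^ 2) * (2 * ρ)) ρ := by
      have ha := (hasDerivAt_pow 2 ρ).const_mul (4 * r ^ 2)
      have hb := (((hasDerivAt_pow 2 ρ).const_add (r ^ 2)).sub_const (t ^ 2)).pow 2
      refine (ha.sub hb).congr_deriv ?_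
      push_cast; ring
    have H := (h1.const_mul ((b / 2) ^ 2)).const_sub ((u - v) ^ 2)
    refine (H).congr_deriv ?_; ring
  exact h.deriv

lemma Pt_eq (b u r t v ρ : ℝ) : Pt b u r t v ρ = b ^ 2 * t * (t ^ 2 - r ^ 2 - ρ ^ 2) := by
  have h : HasDerivAt (fun t' : ℝ => Phi b u r t' v ρ)
      (b ^ 2 * t * (t ^ 2 - r ^ 2 - ρ ^ 2)) t := by
    unfold Phi
    have hb := ((((hasDerivAt_pow 2 t).const_sub (r ^ 2 + ρ ^ 2)).pow 2).const_sub
        (4 * r ^ 2 * ρ ^ 2)).const_mul ((b / 2) ^ 2)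
    have H := hb.const_sub ((u - v) ^ 2)
    refine (H).congr_deriv ?_
    push_cast; ring
  exact h.deriv

lemma Puv_eq (b u r t v ρ : ℝ) : Puv b u r t v ρ = -2 := by
  unfold Puv
  have : (fun u' => Pv b u' r t v ρ) = fun u' => -2 * (u' - v) :=
    funext fun u' => Pv_eq b u' r t v ρ
  rw [this]
  have h : HasDerivAt (fun u' : ℝ => -2 * (u' - v)) (-2 : ℝ) u := by
    have H := ((hasDerivAt_id u).sub_const v).const_mul (-2 : ℝ)
    refine (H).congr_deriv ?_; ring
  exact h.deriv

lemma Pup_eq (b u r t v ρ : ℝ) : Pup b u r t v ρ = 0 := by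
  unfold Pup
  have : (fun u' => Pp b u' r t v ρ) = fun _ => -(b ^ 2) * ρ * (r ^ 2 + t ^ 2 - ρ ^ 2) :=
    funext fun u' => Pp_eq b u' r t v ρ
  rw [this, deriv_const]

lemma Ptv_eq (b u r t v ρ : ℝ) : Ptv b u r t v ρ = 0 := by
  unfold Ptv
  have : (fun t' => Pv b u r t' v ρ) = fun _ => -2 * (u - v) :=
    funext fun t' => Pv_eq b u r t' v ρ
  rw [this, deriv_const]

lemma Ptp_eq (b u r t v ρ : ℝ) : Ptp b u r t v ρ = -2 * b ^ 2 * t * ρ := by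
  unfold Ptp
  have : (fun t' => Pp b u r t' v ρ)
      = fun t' => -(b ^ 2) * ρ * (r ^ 2 + t' ^ 2 - ρ ^ 2) :=
    funext fun t' => Pp_eq b u r t' v ρ
  rw [this]
  have h : HasDerivAt (fun t' : ℝ => -(b ^ 2) * ρ * (r ^ 2 + t' ^ 2 - ρ ^ 2))
      (-2 * b ^ 2 * t * ρ) t := by
    have H := ((((hasDerivAt_pow 2 t).const_add (r ^ 2)).sub_const (ρ ^ 2)).const_mul
      (-(b ^ 2) * ρ))
    refine (H).congr_deriv ?_
    push_cast; ring
  exact h.deriv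

/-- On the zero set of Φ, the rotational curvature of Φ*_r (with r frozen
instead of t) equals 4b⁴r²tρ(r²−t²−ρ²). -/
theorem statement7 (b u r t v ρ : ℝ) (hΦ : Phi b u r t v ρ = 0) :
    Matrix.det !![Phi b u r t v ρ, Pv b u r t v ρ, Pp b u r t v ρ;
                  Pu b u r t v ρ, Puv b u r t v ρ, Pup b u r t v ρ;
                  Pt b u r t v ρ, Ptv b u r t v ρ, Ptp b u r t v ρ]
      = 4 * b ^ 4 * r ^ 2 * t * ρ * (r ^ 2 - t ^ 2 - ρ ^ 2) := by
  rw [Matrix.det_fin_three]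
  simp only [Matrix.cons_val', Matrix.cons_val_zero, Matrix.cons_val_one, Matrix.head_cons,
    Matrix.empty_val', Matrix.cons_val_fin_one, Matrix.head_fin_const, Matrix.cons_val_two,
    Matrix.tail_cons, Matrix.of_apply]
  rw [hΦ, Pu_eq, Pv_eq, Pp_eq, Pt_eq, Puv_eq, Pup_eq, Ptv_eq, Ptp_eq]
  have h : (u - v) ^ 2 = (b / 2) ^ 2 * (4 * r ^ 2 * ρ ^ 2 - (r ^ 2 + ρ ^ 2 - t ^ 2) ^ 2) := by
    have := hΦ; unfold Phi at this; linarith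
  linear_combination (-8 * b ^ 2 * t * ρ) * h
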